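/- Let D be a self-adjoint operator on H and a ∈ B(H). Suppose the domain of the commutator Da − aD (i.e., {ξ ∈ dom(D) : aξ ∈ dom(D)}) is a core for D and Da − aD is bounded on this domain. Then a is weakly D-differentiable and wD(a) equals the closure of Da − aD. -/
import Mathlib

open Complex Filter Topology MeasureTheory
open scoped Topology

local notation "⟪" x ", " y "⟫" => @inner ℂ _ _ x y

variable {H : Type*} [NormedAddCommGroup H] [InnerProductSpace ℂ H] [CompleteSpace H]

/-- `b` is the bounded operator implementing the commutator form
`(ξ, η) ↦ ⟨aξ, Dη⟩ − ⟨aDξ, η⟩` on `dom D × dom D`; i.e. `a` is weakly `D`-differentiable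
with derivative `wD(a) = b`. -/
def IsWeakDeriv (D : H →ₗ.[ℂ] H) (a b : H →L[ℂ] H) : Prop :=
  ∀ ξ η : D.domain, ⟪b (ξ : H), (η : H)⟫ = ⟪a (ξ : H), D η⟫ - ⟪a (D ξ), (η : H)⟫

/-- `conjAd U t a = U t ∘ a ∘ U (−t)`, i.e. `α_t(a) = e^{itD} a e^{-itD}`. -/
noncomputable def conjAd (U : ℝ → H →L[ℂ] H) (t : ℝ) (a : H →L[ℂ] H) : H →L[ℂ] H :=
  (U t).comp (a.comp (U (-t)))

/-- `U` is the strongly continuous one-parameter unitary group `t ↦ e^{itD}`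
generated by the self-adjoint operator `D` (Stone's theorem characterization). -/
structure IsStoneGroupOf (D : H →ₗ.[ℂ] H) (U : ℝ → H →L[ℂ] H) : Prop where
  map_zero : U 0 = 1
  map_add : ∀ s t : ℝ, U (s + t) = (U s).comp (U t)
  isometry : ∀ (t : ℝ) (ξ : H), ‖U t ξ‖ = ‖ξ‖
  hasDerivAt : ∀ ξ : D.domain, HasDerivAt (fun t : ℝ => U t (ξ : H)) (Complex.I • D ξ) 0
  mem_domain : ∀ ξ v : H, HasDerivAt (fun t : ℝ => U t ξ) v 0 → ξ ∈ D.domain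

/-- If the domain `{ξ ∈ dom D : aξ ∈ dom D}` of `Da − aD` is a core for `D`
(every `ξ ∈ dom D` is graph-approximated by such vectors) and `Da − aD`
agrees there with a bounded operator `b`, then `a` is weakly `D`-differentiable
with `wD(a) = b`. -/
theorem isWeakDeriv_of_bounded_commutator_on_core
    (D : H →ₗ.[ℂ] H) (hD : IsSelfAdjoint D)
    (a b : H →L[ℂ] H)
    (hcore : ∀ ξ : D.domain, ∀ ε > (0 : ℝ), ∃ η : D.domain,
      a (η : H) ∈ D.domain ∧ ‖(ξ : H) - (η : H)‖ < ε ∧ ‖D ξ - D η‖ < ε)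
    (hb : ∀ (ξ : D.domain) (h : a (ξ : H) ∈ D.domain),
      D ⟨a (ξ : H), h⟩ - a (D ξ) = b (ξ : H)) :
    IsWeakDeriv D a b := by
  have hsym : ∀ x y : D.domain, ⟪D x, (y : H)⟫ = ⟪(x : H), D y⟫ := by
    have h := D.adjoint_isFormalAdjoint hD.dense_domain
    rw [LinearPMap.isSelfAdjoint_def.mp hD] at h
    exact fun x y => h x y
  intro ξ η
  rw [← sub_eq_zero, ← norm_eq_zero]
  refine le_antisymm (le_of_forall_pos_le_add fun ε hε => ?_) (norm_nonneg _)
  rw [zero_add]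
  set C : ℝ := ‖b‖ * ‖(η : H)‖ + ‖a‖ * ‖(D η : H)‖ + ‖a‖ * ‖(η : H)‖ + 1 with hCdef
  have hC : 0 < C := by positivity
  obtain ⟨ζ, hζ, h1, h2⟩ := hcore ξ (ε / C) (by positivity)
  have h0 : ⟪b (ζ : H), (η : H)⟫ = ⟪a (ζ : H), D η⟫ - ⟪a (D ζ), (η : H)⟫ := by
    rw [← hb ζ hζ, inner_sub_left, hsym ⟨a (ζ : H), hζ⟩ η]
  have expand : ⟪b (ξ : H), (η : H)⟫ - (⟪a (ξ : H), D η⟫ - ⟪a (D ξ), (η : H)⟫)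
      = ⟪b ((ξ : H) - (ζ : H)), (η : H)⟫ - ⟪a ((ξ : H) - (ζ : H)), D η⟫
        + ⟪a (D ξ - D ζ), (η : H)⟫ := by
    simp only [map_sub, inner_sub_left]
    rw [eq_sub_iff_add_eq] at h0
    linear_combination h0
  rw [expand]
  have bnd : ∀ (c : H →L[ℂ] H) (x y : H), ‖⟪c x, y⟫‖ ≤ ‖c‖ * ‖x‖ * ‖y‖ := fun c x y =>
    le_trans (norm_inner_le_norm _ _) (by
      gcongr
      exact c.le_opNorm x)
  have t1 := bnd b ((ξ : H) - (ζ : H)) (η : H)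
  have t2 := bnd a ((ξ : H) - (ζ : H)) (D η : H)
  have t3 := bnd a (D ξ - D ζ) (η : H)
  calc ‖⟪b ((ξ : H) - (ζ : H)), (η : H)⟫ - ⟪a ((ξ : H) - (ζ : H)), D η⟫
        + ⟪a (D ξ - D ζ), (η : H)⟫‖
      ≤ ‖⟪b ((ξ : H) - (ζ : H)), (η : H)⟫ - ⟪a ((ξ : H) - (ζ : H)), D η⟫‖
        + ‖⟪a (D ξ - D ζ), (η : H)⟫‖ := norm_add_le _ _
    _ ≤ (‖⟪b ((ξ : H) - (ζ : H)), (η : H)⟫‖ + ‖⟪a ((ξ : H) - (ζ : H)), D η⟫‖)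
        + ‖⟪a (D ξ - D ζ), (η : H)⟫‖ := by gcongr; exact norm_sub_le _ _
    _ ≤ (‖b‖ * ‖(ξ : H) - (ζ : H)‖ * ‖(η : H)‖ + ‖a‖ * ‖(ξ : H) - (ζ : H)‖ * ‖(D η : H)‖)
        + ‖a‖ * ‖D ξ - D ζ‖ * ‖(η : H)‖ := by gcongr
    _ ≤ (‖b‖ * (ε / C) * ‖(η : H)‖ + ‖a‖ * (ε / C) * ‖(D η : H)‖)
        + ‖a‖ * (ε / C) * ‖(η : H)‖ := by gcongr
    _ = (ε / C) * (C - 1) := by rw [hCdef]; ring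
    _ ≤ ε := by
        rw [div_mul_eq_mul_div, div_le_iff₀ hC]
        nlinarith
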